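/- (One-step improvement without commutability, core of Theorem 6.1.) Fix a task t and let Σ_t = U_t Γ_t U_tᵀ be an eigendecomposition with U_t orthogonal and Γ_t = diag(γ_1,…,γ_p), γ_j ≥ 0. Let v be a square-integrable random vector in ℝ^p independent of ε_t such that E[((U_tᵀ(v − w*))_j)²] > 0 for every j with γ_j > 0. Then there exists a positive definite diagonal matrix Λ_t such that, taking H_t := U_t Λ_t U_tᵀ, the generalized ℓ₂-regularized update ŵ := argmin_w { (1/n_t)‖X_t w − y_t‖² + (w − v)ᵀ H_t (w − v) } satisfies E‖ŵ − w*‖² ≤ E‖v − w*‖², with strict inequality whenever γ_j > 0 for at least one j. -/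

import Mathlib

open MeasureTheory Matrix ProbabilityTheory

private lemma sum_sq_dot {n : ℕ} (u : Fin n → ℝ) : ∑ i, u i ^ 2 = u ⬝ᵥ u := by
  simp [dotProduct, sq]

private lemma sq_sum_expand {n : ℕ} (a b : Fin n → ℝ) :
    ∑ i, (a i - b i) ^ 2 = a ⬝ᵥ a - 2 * (a ⬝ᵥ b) + b ⬝ᵥ b := by
  simp only [dotProduct, Finset.mul_sum]
  rw [← Finset.sum_sub_distrib, ← Finset.sum_add_distrib]
  exact Finset.sum_congr rfl fun i _ => by ring

private lemma orth_dot {p : ℕ} {U : Matrix (Fin p) (Fin p) ℝ} (hU' : U * Uᵀ = 1)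
    (a b : Fin p → ℝ) : (Uᵀ *ᵥ a) ⬝ᵥ (Uᵀ *ᵥ b) = a ⬝ᵥ b := by
  have h1 : Uᵀ *ᵥ a = a ᵥ* U := Matrix.mulVec_transpose U a
  rw [h1, Matrix.dotProduct_mulVec, Matrix.vecMul_vecMul, hU', Matrix.vecMul_one]

private lemma quadForm_diag {p : ℕ} (U : Matrix (Fin p) (Fin p) ℝ) (g : Fin p → ℝ)
    (d d' : Fin p → ℝ) :
    d ⬝ᵥ ((U * Matrix.diagonal g * Uᵀ) *ᵥ d')
      = ∑ j, g j * ((Uᵀ *ᵥ d) j * (Uᵀ *ᵥ d') j) := by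
  rw [← Matrix.mulVec_mulVec, ← Matrix.mulVec_mulVec]
  have h1 : d ⬝ᵥ (U *ᵥ (Matrix.diagonal g *ᵥ (Uᵀ *ᵥ d')))
      = (Uᵀ *ᵥ d) ⬝ᵥ (Matrix.diagonal g *ᵥ (Uᵀ *ᵥ d')) := by
    rw [Matrix.dotProduct_mulVec, Matrix.mulVec_transpose, Matrix.mulVec_transpose]
  rw [h1]
  simp only [dotProduct, Matrix.mulVec_diagonal]
  exact Finset.sum_congr rfl fun j _ => by ring

private lemma objective_decomp {n p : ℕ} (hn : 0 < n)
    (X : Matrix (Fin n) (Fin p) ℝ)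
    (U : Matrix (Fin p) (Fin p) ℝ) (hU : Uᵀ * U = 1)
    (γ lam : Fin p → ℝ)
    (hSig : (n : ℝ)⁻¹ • (Xᵀ * X) = U * Matrix.diagonal γ * Uᵀ)
    (wstar vv : Fin p → ℝ) (e : Fin n → ℝ) (w : Fin p → ℝ) :
    (n : ℝ)⁻¹ * ∑ i, (X *ᵥ w - (X *ᵥ wstar + e)) i ^ 2
      + (w - vv) ⬝ᵥ ((U * Matrix.diagonal lam * Uᵀ) *ᵥ (w - vv))
    = ∑ j, (γ j * ((Uᵀ *ᵥ (w - wstar)) j) ^ 2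
          - 2 * ((Uᵀ *ᵥ (w - wstar)) j) * ((n : ℝ)⁻¹ * (Uᵀ *ᵥ (Xᵀ *ᵥ e)) j)
          + lam j * ((Uᵀ *ᵥ (w - wstar)) j - (Uᵀ *ᵥ (vv - wstar)) j) ^ 2)
      + (n : ℝ)⁻¹ * ∑ i, e i ^ 2 := by
  have hU' : U * Uᵀ = 1 := mul_eq_one_comm.mp hU
  have hnne : (n : ℝ) ≠ 0 := Nat.cast_ne_zero.mpr hn.ne'
  have hXtX : Xᵀ * X = (n : ℝ) • (U * Matrix.diagonal γ * Uᵀ) := by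
    rw [← hSig, smul_smul, mul_inv_cancel₀ hnne, one_smul]
  have h0 : X *ᵥ w - (X *ᵥ wstar + e) = X *ᵥ (w - wstar) - e := by
    rw [Matrix.mulVec_sub]; abel
  have hA : (n : ℝ)⁻¹ * ((X *ᵥ (w - wstar)) ⬝ᵥ (X *ᵥ (w - wstar)))
      = ∑ j, γ j * ((Uᵀ *ᵥ (w - wstar)) j) ^ 2 := by
    have h1 : (X *ᵥ (w - wstar)) ⬝ᵥ (X *ᵥ (w - wstar))
        = (w - wstar) ⬝ᵥ ((Xᵀ * X) *ᵥ (w - wstar)) := by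
      rw [Matrix.dotProduct_mulVec, ← Matrix.transpose_transpose X,
        Matrix.vecMul_transpose, Matrix.transpose_transpose, Matrix.mulVec_mulVec,
        dotProduct_comm]
    rw [h1, hXtX, Matrix.smul_mulVec, dotProduct_smul, smul_eq_mul,
      ← mul_assoc, inv_mul_cancel₀ hnne, one_mul, quadForm_diag]
    exact Finset.sum_congr rfl fun j _ => by ring
  have hB : (X *ᵥ (w - wstar)) ⬝ᵥ e
      = ∑ j, ((Uᵀ *ᵥ (w - wstar)) j) * ((Uᵀ *ᵥ (Xᵀ *ᵥ e)) j) := by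
    have h1 : (X *ᵥ (w - wstar)) ⬝ᵥ e = (w - wstar) ⬝ᵥ (Xᵀ *ᵥ e) := by
      rw [dotProduct_comm, Matrix.dotProduct_mulVec, ← Matrix.mulVec_transpose,
        dotProduct_comm]
    rw [h1, ← orth_dot hU' (w - wstar) (Xᵀ *ᵥ e)]
    rfl
  have hRg : (w - vv) ⬝ᵥ ((U * Matrix.diagonal lam * Uᵀ) *ᵥ (w - vv))
      = ∑ j, lam j * ((Uᵀ *ᵥ (w - wstar)) j - (Uᵀ *ᵥ (vv - wstar)) j) ^ 2 := by
    rw [quadForm_diag]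
    refine Finset.sum_congr rfl fun j _ => ?_
    have h2 : (Uᵀ *ᵥ (w - vv)) j
        = (Uᵀ *ᵥ (w - wstar)) j - (Uᵀ *ᵥ (vv - wstar)) j := by
      have h3 : w - vv = (w - wstar) - (vv - wstar) := by abel
      rw [h3, Matrix.mulVec_sub]; rfl
    rw [h2]; ring
  rw [h0]
  have hsq : ∑ i, (X *ᵥ (w - wstar) - e) i ^ 2
      = ∑ i, ((X *ᵥ (w - wstar)) i - e i) ^ 2 := rfl
  rw [hsq, sq_sum_expand, hRg]
  have hE : e ⬝ᵥ e = ∑ i, e i ^ 2 := (sum_sq_dot e).symm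
  have hpull : ∑ j, 2 * ((Uᵀ *ᵥ (w - wstar)) j) * ((n : ℝ)⁻¹ * (Uᵀ *ᵥ (Xᵀ *ᵥ e)) j)
      = 2 * (n : ℝ)⁻¹ * ∑ j, ((Uᵀ *ᵥ (w - wstar)) j) * ((Uᵀ *ᵥ (Xᵀ *ᵥ e)) j) := by
    rw [Finset.mul_sum]
    exact Finset.sum_congr rfl fun j _ => by ring
  rw [Finset.sum_add_distrib, Finset.sum_sub_distrib, hpull, ← hA, ← hB, hE]
  ring

private lemma complete_sq {γ lam s t ξ : ℝ} (h : 0 < γ + lam) :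
    γ * s ^ 2 - 2 * s * ξ + lam * (s - t) ^ 2
      = (γ + lam) * (s - (ξ + lam * t) / (γ + lam)) ^ 2
        + (lam * t ^ 2 - (ξ + lam * t) ^ 2 / (γ + lam)) := by
  field_simp
  ring

private lemma memL2_dot {Ω : Type} [MeasurableSpace Ω] {μ : Measure Ω} {n : ℕ}
    (c : Fin n → ℝ) (f : Ω → Fin n → ℝ) (hf : ∀ i, MemLp (fun ω => f ω i) 2 μ) :
    MemLp (fun ω => ∑ i, c i * f ω i) 2 μ := by
  have h := memLp_finset_sum' (μ := μ) (p := 2) Finset.univ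
    (f := fun i ω => c i * f ω i) (fun i _ => (hf i).const_mul (c i))
  have he : (fun ω => ∑ i, c i * f ω i) = ∑ i : Fin n, fun ω => c i * f ω i := by
    funext ω; simp
  rw [he]; exact h

private lemma integrable_mul_L2 {Ω : Type} [MeasurableSpace Ω] {μ : Measure Ω}
    {f g : Ω → ℝ} (hf : MemLp f 2 μ) (hg : MemLp g 2 μ) :
    Integrable (fun ω => f ω * g ω) μ := by
  have h : Integrable (fun ω => (f ω ^ 2 + g ω ^ 2) / 2) μ :=
    (hf.integrable_sq.add hg.integrable_sq).div_const 2
  refine h.mono' (hf.aestronglyMeasurable.mul hg.aestronglyMeasurable) ?_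
  filter_upwards with ω
  have h1 : |f ω| * |g ω| ≤ (f ω ^ 2 + g ω ^ 2) / 2 := by
    nlinarith [sq_nonneg (|f ω| - |g ω|), sq_abs (f ω), sq_abs (g ω),
      abs_nonneg (f ω), abs_nonneg (g ω)]
  simpa [Real.norm_eq_abs, abs_mul] using h1

private lemma dot_eps_sq_integral {Ω : Type} [MeasurableSpace Ω] {μ : Measure Ω}
    [IsProbabilityMeasure μ] {n : ℕ} {σ2 : ℝ} {ε : Ω → Fin n → ℝ}
    (hεL2 : ∀ i, MemLp (fun ω => ε ω i) 2 μ)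
    (hcov : ∀ i i', ∫ ω, ε ω i * ε ω i' ∂μ = if i = i' then σ2 else 0)
    (c : Fin n → ℝ) :
    ∫ ω, (∑ i, c i * ε ω i) ^ 2 ∂μ = σ2 * ∑ i, c i ^ 2 := by
  have key : ∀ ω, (∑ i, c i * ε ω i) ^ 2
      = ∑ i, ∑ i', (c i * c i') * (ε ω i * ε ω i') := by
    intro ω
    rw [sq, Finset.sum_mul_sum]
    exact Finset.sum_congr rfl fun i _ => Finset.sum_congr rfl fun i' _ => by ring
  simp only [key]
  rw [integral_finset_sum _ (fun i _ => ?_)]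
  · have : ∀ i, ∫ ω, ∑ i', (c i * c i') * (ε ω i * ε ω i') ∂μ
        = ∑ i', (c i * c i') * ∫ ω, ε ω i * ε ω i' ∂μ := by
      intro i
      rw [integral_finset_sum _ (fun i' _ =>
        (integrable_mul_L2 (hεL2 i) (hεL2 i')).const_mul _)]
      exact Finset.sum_congr rfl fun i' _ => integral_const_mul _ _
    simp only [this, hcov]
    rw [Finset.mul_sum]
    refine Finset.sum_congr rfl fun i _ => ?_
    simp [Finset.sum_ite_eq, mul_ite]
    ring
  · exact integrable_finset_sum _ (fun i' _ =>
      (integrable_mul_L2 (hεL2 i) (hεL2 i')).const_mul _)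

private lemma indep_cross {Ω : Type} [MeasurableSpace Ω] {μ : Measure Ω}
    [IsProbabilityMeasure μ] {n p : ℕ} {v : Ω → Fin p → ℝ} {ε : Ω → Fin n → ℝ}
    (hindep : IndepFun v ε μ)
    (hvL2 : ∀ k, MemLp (fun ω => v ω k) 2 μ)
    (hεL2 : ∀ i, MemLp (fun ω => ε ω i) 2 μ)
    (hmean : ∀ i, ∫ ω, ε ω i ∂μ = 0)
    (b w0 : Fin p → ℝ) (c : Fin n → ℝ) :
    ∫ ω, (∑ k, b k * (v ω k - w0 k)) * (∑ i, c i * ε ω i) ∂μ = 0 := by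
  have hφm : Measurable (fun u : Fin p → ℝ => ∑ k, b k * (u k - w0 k)) :=
    Finset.measurable_sum _ fun k _ =>
      ((measurable_pi_apply k).sub measurable_const).const_mul _
  have hψm : Measurable (fun u : Fin n → ℝ => ∑ i, c i * u i) :=
    Finset.measurable_sum _ fun i _ => (measurable_pi_apply i).const_mul _
  have hIF : IndepFun ((fun u : Fin p → ℝ => ∑ k, b k * (u k - w0 k)) ∘ v)
      ((fun u : Fin n → ℝ => ∑ i, c i * u i) ∘ ε) μ := hindep.comp hφm hψm
  have h1 : MemLp (fun ω => ∑ k, b k * (v ω k - w0 k)) 2 μ :=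
    memL2_dot b _ (fun k => (hvL2 k).sub (memLp_const _))
  have h2 : MemLp (fun ω => ∑ i, c i * ε ω i) 2 μ := memL2_dot c _ hεL2
  have hmul := hIF.integral_fun_mul_eq_mul_integral h1.aestronglyMeasurable h2.aestronglyMeasurable
  have hz : ∫ ω, ∑ i, c i * ε ω i ∂μ = 0 := by
    rw [integral_finset_sum _ (fun i _ => ((hεL2 i).integrable one_le_two).const_mul _)]
    simp [integral_const_mul, hmean]
  calc ∫ ω, (∑ k, b k * (v ω k - w0 k)) * (∑ i, c i * ε ω i) ∂μ
      = (∫ ω, ∑ k, b k * (v ω k - w0 k) ∂μ) * ∫ ω, ∑ i, c i * ε ω i ∂μ := hmul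
    _ = 0 := by rw [hz, mul_zero]

/-- **One-step improvement without commutability, core of
Theorem 6.1.** -/
theorem one_step_improvement_no_commutability
    {Ω : Type} [MeasurableSpace Ω] (μ : Measure Ω) [IsProbabilityMeasure μ]
    (n p : ℕ) (hn : 0 < n)
    (X : Matrix (Fin n) (Fin p) ℝ)
    (U : Matrix (Fin p) (Fin p) ℝ) (hU : Uᵀ * U = 1)
    (γ : Fin p → ℝ) (hγ : ∀ j, 0 ≤ γ j)
    (hSig : (n : ℝ)⁻¹ • (Xᵀ * X) = U * Matrix.diagonal γ * Uᵀ)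
    (wstar : Fin p → ℝ)
    (σ2 : ℝ) (hσ2 : 0 < σ2)
    (ε : Ω → Fin n → ℝ)
    (hεL2 : ∀ i, MemLp (fun ω => ε ω i) 2 μ)
    (hmean : ∀ i, ∫ ω, ε ω i ∂μ = 0)
    (hcov : ∀ i i', ∫ ω, ε ω i * ε ω i' ∂μ = if i = i' then σ2 else 0)
    (v : Ω → Fin p → ℝ)
    (hvL2 : ∀ j, MemLp (fun ω => v ω j) 2 μ)
    (hindep : IndepFun v ε μ)
    (hvpos : ∀ j, 0 < γ j →
      0 < ∫ ω, (∑ k, U k j * (v ω k - wstar k)) ^ 2 ∂μ) :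
    ∃ lam : Fin p → ℝ, (∀ j, 0 < lam j) ∧
      ∀ what : Ω → Fin p → ℝ,
        (∀ j, MemLp (fun ω => what ω j) 2 μ) →
        (∀ ω w, (n : ℝ)⁻¹ * ∑ i, (X *ᵥ what ω - (X *ᵥ wstar + ε ω)) i ^ 2
              + (what ω - v ω) ⬝ᵥ
                  ((U * Matrix.diagonal lam * Uᵀ) *ᵥ (what ω - v ω))
            ≤ (n : ℝ)⁻¹ * ∑ i, (X *ᵥ w - (X *ᵥ wstar + ε ω)) i ^ 2
              + (w - v ω) ⬝ᵥ
                  ((U * Matrix.diagonal lam * Uᵀ) *ᵥ (w - v ω))) →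
        (∫ ω, ∑ j, (what ω j - wstar j) ^ 2 ∂μ
            ≤ ∫ ω, ∑ j, (v ω j - wstar j) ^ 2 ∂μ)
        ∧ ((∃ j, 0 < γ j) →
            ∫ ω, ∑ j, (what ω j - wstar j) ^ 2 ∂μ
              < ∫ ω, ∑ j, (v ω j - wstar j) ^ 2 ∂μ) := by
  classical
  have hU' : U * Uᵀ = 1 := mul_eq_one_comm.mp hU
  have hnR : (0:ℝ) < (n:ℝ) := by exact_mod_cast hn
  have hnne : (n:ℝ) ≠ 0 := ne_of_gt hnR
  set z : Ω → Fin p → ℝ := fun ω j => ∑ k, U k j * (v ω k - wstar k) with hzdef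
  set a : Fin p → ℝ := fun j => ∫ ω, (z ω j) ^ 2 ∂μ with hadef
  have hzL2 : ∀ j, MemLp (fun ω => z ω j) 2 μ := by
    intro j
    simp only [hzdef]
    exact memL2_dot _ _ (fun k => (hvL2 k).sub (memLp_const _))
  have hapos : ∀ j, 0 < γ j → 0 < a j := by
    intro j hj
    simp only [hadef, hzdef]
    exact hvpos j hj
  set lam : Fin p → ℝ := fun j => if 0 < γ j then σ2 / ((n:ℝ) * a j) else 1 with hlamdef
  have hlampos : ∀ j, 0 < lam j := by
    intro j
    simp only [hlamdef]
    by_cases hj : 0 < γ j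
    · simp only [hj, if_true]
      exact div_pos hσ2 (mul_pos hnR (hapos j hj))
    · simp [hj]
  have hgl : ∀ j, 0 < γ j + lam j := fun j => add_pos_of_nonneg_of_pos (hγ j) (hlampos j)
  refine ⟨lam, hlampos, ?_⟩
  intro what hwhatL2 hmin
  set cf : Fin p → Fin n → ℝ := fun j i => (n:ℝ)⁻¹ * ∑ k, U k j * X i k with hcfdef
  set ξ : Ω → Fin p → ℝ := fun ω j => ∑ i, cf j i * ε ω i with hxidef
  have hxieq : ∀ (e : Fin n → ℝ) j, (n:ℝ)⁻¹ * (Uᵀ *ᵥ (Xᵀ *ᵥ e)) j = ∑ i, cf j i * e i := by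
    intro e j
    simp only [hcfdef, Matrix.mulVec, dotProduct, Matrix.transpose_apply]
    simp only [Finset.mul_sum, Finset.sum_mul]
    rw [Finset.sum_comm]
    exact Finset.sum_congr rfl fun i _ => Finset.sum_congr rfl fun k _ => by ring
  have hzeq : ∀ (u : Fin p → ℝ) j, (Uᵀ *ᵥ (u - wstar)) j = ∑ k, U k j * (u k - wstar k) := by
    intro u j
    simp [Matrix.mulVec, dotProduct, Matrix.transpose_apply]
  set m : Ω → Fin p → ℝ := fun ω j => (ξ ω j + lam j * z ω j) / (γ j + lam j) with hmdef
  set C : Ω → ℝ := fun ω =>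
    ∑ j, (lam j * (z ω j) ^ 2 - (ξ ω j + lam j * z ω j) ^ 2 / (γ j + lam j))
      + (n:ℝ)⁻¹ * ∑ i, ε ω i ^ 2 with hCdef
  have hid : ∀ ω (w : Fin p → ℝ),
      (n : ℝ)⁻¹ * ∑ i, (X *ᵥ w - (X *ᵥ wstar + ε ω)) i ^ 2
        + (w - v ω) ⬝ᵥ ((U * Matrix.diagonal lam * Uᵀ) *ᵥ (w - v ω))
      = ∑ j, (γ j + lam j) * ((Uᵀ *ᵥ (w - wstar)) j - m ω j) ^ 2 + C ω := by
    intro ω w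
    rw [objective_decomp hn X U hU γ lam hSig wstar (v ω) (ε ω) w, hCdef]
    have hterm : ∀ j, γ j * ((Uᵀ *ᵥ (w - wstar)) j) ^ 2
          - 2 * ((Uᵀ *ᵥ (w - wstar)) j) * ((n : ℝ)⁻¹ * (Uᵀ *ᵥ (Xᵀ *ᵥ ε ω)) j)
          + lam j * ((Uᵀ *ᵥ (w - wstar)) j - (Uᵀ *ᵥ (v ω - wstar)) j) ^ 2
        = (γ j + lam j) * ((Uᵀ *ᵥ (w - wstar)) j - m ω j) ^ 2
          + (lam j * (z ω j) ^ 2 - (ξ ω j + lam j * z ω j) ^ 2 / (γ j + lam j)) := by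
      intro j
      simp only [hmdef, hzdef, hxidef]
      rw [hxieq (ε ω) j, hzeq (v ω) j]
      exact complete_sq (hgl j)
    rw [Finset.sum_congr rfl (fun j _ => hterm j), Finset.sum_add_distrib]
    ring
  have hS : ∀ ω j, (Uᵀ *ᵥ (what ω - wstar)) j = m ω j := by
    intro ω j
    have h0 := hmin ω (wstar + U *ᵥ m ω)
    rw [hid ω (what ω), hid ω (wstar + U *ᵥ m ω)] at h0
    have hw0 : Uᵀ *ᵥ (wstar + U *ᵥ m ω - wstar) = m ω := by
      rw [add_sub_cancel_left, Matrix.mulVec_mulVec, hU, Matrix.one_mulVec]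
    rw [hw0] at h0
    have hzero : ∑ j', (γ j' + lam j') * (m ω j' - m ω j') ^ 2 = 0 :=
      Finset.sum_eq_zero fun j' _ => by simp
    rw [hzero, zero_add] at h0
    have hsum : ∑ j', (γ j' + lam j') * ((Uᵀ *ᵥ (what ω - wstar)) j' - m ω j') ^ 2 ≤ 0 := by
      linarith
    have hnn : ∀ j' ∈ Finset.univ,
        (0:ℝ) ≤ (γ j' + lam j') * ((Uᵀ *ᵥ (what ω - wstar)) j' - m ω j') ^ 2 :=
      fun j' _ => mul_nonneg (hgl j').le (sq_nonneg _)
    have hz0 := (Finset.sum_eq_zero_iff_of_nonneg hnn).1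
      (le_antisymm hsum (Finset.sum_nonneg hnn)) j (Finset.mem_univ j)
    rcases mul_eq_zero.1 hz0 with h | h
    · exact absurd h (ne_of_gt (hgl j))
    · exact sub_eq_zero.1 (pow_eq_zero_iff two_ne_zero |>.1 h)
  have herr : ∀ ω, ∑ j, (what ω j - wstar j) ^ 2 = ∑ j, (m ω j) ^ 2 := by
    intro ω
    have h1 : ∑ j, (what ω j - wstar j) ^ 2 = (what ω - wstar) ⬝ᵥ (what ω - wstar) := by
      simp [dotProduct, sq]
    rw [h1, ← orth_dot hU' (what ω - wstar) (what ω - wstar)]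
    simp only [dotProduct]
    exact Finset.sum_congr rfl fun j _ => by rw [hS ω j]; ring
  have hverr : ∀ ω, ∑ j, (v ω j - wstar j) ^ 2 = ∑ j, (z ω j) ^ 2 := by
    intro ω
    have h1 : ∑ j, (v ω j - wstar j) ^ 2 = (v ω - wstar) ⬝ᵥ (v ω - wstar) := by
      simp [dotProduct, sq]
    rw [h1, ← orth_dot hU' (v ω - wstar) (v ω - wstar)]
    simp only [dotProduct]
    refine Finset.sum_congr rfl fun j _ => ?_
    rw [hzeq (v ω) j]
    simp only [hzdef]
    ring
  have hxiL2 : ∀ j, MemLp (fun ω => ξ ω j) 2 μ := by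
    intro j; simp only [hxidef]; exact memL2_dot _ _ hεL2
  have hmL2 : ∀ j, MemLp (fun ω => m ω j) 2 μ := by
    intro j
    have heq : (fun ω => m ω j) = fun ω => (γ j + lam j)⁻¹ * (ξ ω j + lam j * z ω j) := by
      funext ω; simp only [hmdef]; rw [div_eq_inv_mul]
    rw [heq]
    exact ((hxiL2 j).add ((hzL2 j).const_mul _)).const_mul _
  have hcross : ∀ j, ∫ ω, z ω j * ξ ω j ∂μ = 0 := by
    intro j
    simp only [hzdef, hxidef]
    exact indep_cross hindep hvL2 hεL2 hmean (fun k => U k j) wstar (cf j)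
  have hcf2 : ∀ j, ∑ i, cf j i ^ 2 = γ j / n := by
    intro j
    have hcol : ∀ i, cf j i = (n:ℝ)⁻¹ * (X *ᵥ fun k => U k j) i := by
      intro i; simp only [hcfdef, Matrix.mulVec, dotProduct]
      congr 1; exact Finset.sum_congr rfl fun k _ => by ring
    simp only [hcol]
    have h1 : ∑ i, ((n:ℝ)⁻¹ * (X *ᵥ fun k => U k j) i) ^ 2
        = (n:ℝ)⁻¹ ^ 2 * ((X *ᵥ (fun k => U k j)) ⬝ᵥ (X *ᵥ fun k => U k j)) := by
      simp only [dotProduct, Finset.mul_sum]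
      exact Finset.sum_congr rfl fun i _ => by ring
    rw [h1]
    have h2 : (X *ᵥ (fun k => U k j)) ⬝ᵥ (X *ᵥ fun k => U k j)
        = (fun k => U k j) ⬝ᵥ ((Xᵀ * X) *ᵥ fun k => U k j) := by
      rw [Matrix.dotProduct_mulVec, ← Matrix.transpose_transpose X,
        Matrix.vecMul_transpose, Matrix.transpose_transpose, Matrix.mulVec_mulVec,
        dotProduct_comm]
    have hXtX : Xᵀ * X = (n : ℝ) • (U * Matrix.diagonal γ * Uᵀ) := by
      rw [← hSig, smul_smul, mul_inv_cancel₀ hnne, one_smul]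
    rw [h2, hXtX, Matrix.smul_mulVec, dotProduct_smul, smul_eq_mul,
      quadForm_diag]
    have hcolU : ∀ k, (Uᵀ *ᵥ fun k' => U k' j) k = if k = j then 1 else 0 := by
      intro k
      have h3 : (Uᵀ *ᵥ fun k' => U k' j) k = (Uᵀ * U) k j := by
        simp [Matrix.mulVec, dotProduct, Matrix.mul_apply, Matrix.transpose_apply]
      rw [h3, hU, Matrix.one_apply]
    simp only [hcolU]
    have h4 : ∀ k, γ k * ((if k = j then (1:ℝ) else 0) * (if k = j then 1 else 0))
        = if k = j then γ k else 0 := by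
      intro k; by_cases hkj : k = j <;> simp [hkj]
    simp only [h4, Finset.sum_ite_eq', Finset.mem_univ, if_true]
    field_simp
  have hxisq : ∀ j, ∫ ω, (ξ ω j) ^ 2 ∂μ = σ2 * (γ j / n) := by
    intro j
    simp only [hxidef]
    rw [dot_eps_sq_integral hεL2 hcov (cf j), hcf2 j]
  have hmsq : ∀ j, ∫ ω, (m ω j) ^ 2 ∂μ
      = (σ2 * (γ j / n) + lam j ^ 2 * a j) / (γ j + lam j) ^ 2 := by
    intro j
    have heq : (fun ω => (m ω j) ^ 2) = fun ω =>
        ((ξ ω j) ^ 2 + (2 * lam j) * (z ω j * ξ ω j) + lam j ^ 2 * (z ω j) ^ 2)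
          / (γ j + lam j) ^ 2 := by
      funext ω; simp only [hmdef]; rw [div_pow]; congr 1; ring
    have int1 : Integrable (fun ω => (ξ ω j) ^ 2) μ := (hxiL2 j).integrable_sq
    have int2 : Integrable (fun ω => (2 * lam j) * (z ω j * ξ ω j)) μ :=
      (integrable_mul_L2 (hzL2 j) (hxiL2 j)).const_mul _
    have int3 : Integrable (fun ω => lam j ^ 2 * (z ω j) ^ 2) μ :=
      (hzL2 j).integrable_sq.const_mul _
    calc ∫ ω, (m ω j) ^ 2 ∂μ
        = ∫ ω, ((ξ ω j) ^ 2 + (2 * lam j) * (z ω j * ξ ω j) + lam j ^ 2 * (z ω j) ^ 2)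
            / (γ j + lam j) ^ 2 ∂μ := by rw [heq]
      _ = (∫ ω, ((ξ ω j) ^ 2 + (2 * lam j) * (z ω j * ξ ω j) + lam j ^ 2 * (z ω j) ^ 2) ∂μ)
            / (γ j + lam j) ^ 2 := integral_div _ _
      _ = ((∫ ω, (ξ ω j) ^ 2 ∂μ) + ((2 * lam j) * ∫ ω, z ω j * ξ ω j ∂μ)
            + lam j ^ 2 * ∫ ω, (z ω j) ^ 2 ∂μ) / (γ j + lam j) ^ 2 := by
          have e1 : ∫ ω, ((ξ ω j) ^ 2 + (2 * lam j) * (z ω j * ξ ω j)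
                + lam j ^ 2 * (z ω j) ^ 2) ∂μ
              = (∫ ω, ((ξ ω j) ^ 2 + (2 * lam j) * (z ω j * ξ ω j)) ∂μ)
                + ∫ ω, lam j ^ 2 * (z ω j) ^ 2 ∂μ :=
            integral_add (int1.add int2) int3
          have e2 : ∫ ω, ((ξ ω j) ^ 2 + (2 * lam j) * (z ω j * ξ ω j)) ∂μ
              = (∫ ω, (ξ ω j) ^ 2 ∂μ) + ∫ ω, (2 * lam j) * (z ω j * ξ ω j) ∂μ :=
            integral_add int1 int2
          rw [e1, e2, integral_const_mul, integral_const_mul]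
      _ = (σ2 * (γ j / n) + lam j ^ 2 * a j) / (γ j + lam j) ^ 2 := by
          rw [hxisq j, hcross j, mul_zero, add_zero]
  have hLHS : ∫ ω, ∑ j, (what ω j - wstar j) ^ 2 ∂μ
      = ∑ j, (σ2 * (γ j / n) + lam j ^ 2 * a j) / (γ j + lam j) ^ 2 := by
    simp only [herr]
    rw [integral_finset_sum _ (fun j _ => (hmL2 j).integrable_sq)]
    exact Finset.sum_congr rfl fun j _ => hmsq j
  have hRHS : ∫ ω, ∑ j, (v ω j - wstar j) ^ 2 ∂μ = ∑ j, a j := by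
    simp only [hverr]
    rw [integral_finset_sum _ (fun j _ => (hzL2 j).integrable_sq)]
  have hkeystrict : ∀ j, 0 < γ j →
      (σ2 * (γ j / n) + lam j ^ 2 * a j) / (γ j + lam j) ^ 2 < a j := by
    intro j hj
    have hA := hapos j hj
    have hlamj : lam j = σ2 / ((n:ℝ) * a j) := by simp only [hlamdef, if_pos hj]
    have hL : 0 < lam j := hlampos j
    have h2 : a j * lam j = σ2 / n := by
      rw [hlamj]
      field_simp
    have h3 : σ2 * (γ j / n) = γ j * (a j * lam j) := by rw [h2]; ring
    have hexp : a j * (γ j + lam j) ^ 2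
        = a j * γ j ^ 2 + 2 * (a j * γ j * lam j) + a j * lam j ^ 2 := by ring
    have h4 : 0 < a j * γ j ^ 2 := by positivity
    have h5 : 0 < a j * γ j * lam j := mul_pos (mul_pos hA hj) hL
    rw [div_lt_iff₀ (by positivity), h3]
    nlinarith [h4, h5, hexp]
  have hkey : ∀ j, (σ2 * (γ j / n) + lam j ^ 2 * a j) / (γ j + lam j) ^ 2 ≤ a j := by
    intro j
    by_cases hj : 0 < γ j
    · exact (hkeystrict j hj).le
    · have hγ0 : γ j = 0 := le_antisymm (not_lt.1 hj) (hγ j)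
      have hlam1 : lam j = 1 := by simp only [hlamdef, if_neg hj]
      rw [hγ0, hlam1]
      norm_num
  constructor
  · rw [hLHS, hRHS]
    exact Finset.sum_le_sum fun j _ => hkey j
  · rintro ⟨j0, hj0⟩
    rw [hLHS, hRHS]
    exact Finset.sum_lt_sum (fun j _ => hkey j)
      ⟨j0, Finset.mem_univ j0, hkeystrict j0 hj0⟩
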